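/- Let G = ℤ, let A = {x, x⁻¹} map to the generator 1 of ℤ and its inverse, and let L = { xⁿ : n ∈ ℤ } (xx⁻¹)*. Then (A, L) is not a biautomatic structure: for every constant k there exist words w₁, w₂ ∈ L⁻¹ with π(w₁) = π(w₂) and D(w₁, w₂) > k; explicitly, the words (xx⁻¹)ⁿ xⁿ and xⁿ of L⁻¹ represent the same element of ℤ but satisfy D((xx⁻¹)ⁿ xⁿ, xⁿ) ≥ n. -/

import Mathlib

/-- The evaluation of a word over the alphabet `A` in the group `G`, via the letter map `φ`;
this is the monoid homomorphism `π : A* → G`. -/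
def evalWord {A G : Type*} [Group G] (φ : A → G) (w : List A) : G := (w.map φ).prod

/-- The word metric on `G` relative to the letter map `φ : A → G`:
`d(g,h)` is the least length of a word `u` with `π(u) = g⁻¹h`. -/
noncomputable def wordDist {A G : Type*} [Group G] (φ : A → G) (g h : G) : ℕ :=
  sInf {n | ∃ u : List A, u.length = n ∧ evalWord φ u = g⁻¹ * h}

/-- The synchronous uniform distance between two words: the maximum over `n` of the
word-metric distance between the values of the length-`n` prefixes. -/
noncomputable def unifDist {A G : Type*} [Group G] (φ : A → G) (w₁ w₂ : List A) : ℕ :=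
  sSup {m | ∃ n : ℕ, m = wordDist φ (evalWord φ (w₁.take n)) (evalWord φ (w₂.take n))}

/-- The formal inverse of a word: reverse it and invert each letter via `ι`. -/
def wordInv {A : Type*} (ι : A → A) (w : List A) : List A := w.reverse.map ι

/-- `(A, L)` is an automatic structure for the group `G` (with letter map `φ`):
`L` is regular, maps onto `G`, and satisfies the one-sided fellow traveller property. -/
def IsAutomaticStructure {A G : Type*} [Group G] (φ : A → G) (L : Language A) : Prop :=
  L.IsRegular ∧ (∀ g : G, ∃ w ∈ L, evalWord φ w = g) ∧
    ∃ k : ℕ, ∀ w₁ ∈ L, ∀ w₂ ∈ L, ∀ a : Option A,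
      evalWord φ (w₁ ++ a.toList) = evalWord φ w₂ →
        unifDist φ (w₁ ++ a.toList) w₂ ≤ k

/-- `(A, L)` is a biautomatic structure: both `(A, L)` and `(A, L⁻¹)` are automatic. -/
def IsBiautomaticStructure {A G : Type*} [Group G] (φ : A → G) (ι : A → A)
    (L : Language A) : Prop :=
  IsAutomaticStructure φ L ∧
    IsAutomaticStructure φ ((wordInv ι '' (L : Set (List A)) : Set (List A)) : Language A)

/-- The alphabet `A = {x, x⁻¹}`. -/
inductive ZLetter : Type
  | x : ZLetter
  | xi : ZLetter
  deriving DecidableEq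

instance : Fintype ZLetter := ⟨{.x, .xi}, fun a => by cases a <;> simp⟩

/-- The formal inversion on the alphabet `{x, x⁻¹}`. -/
def ZLetter.inv : ZLetter → ZLetter
  | .x => .xi
  | .xi => .x

/-- The letter map sending `x` to the generator `1` of `ℤ` (written multiplicatively)
and `x⁻¹` to its inverse. -/
def zLetterMap : ZLetter → Multiplicative ℤ
  | .x => Multiplicative.ofAdd 1
  | .xi => Multiplicative.ofAdd (-1)

/-- The word `xⁿ` for `n : ℤ`: `n` copies of `x` if `n ≥ 0`, and `-n` copies of `x⁻¹`
if `n < 0`. -/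
def zLetterZPow (n : ℤ) : List ZLetter :=
  if 0 ≤ n then List.replicate n.toNat .x else List.replicate (-n).toNat .xi

/-- The language `L = { xⁿ : n ∈ ℤ } (xx⁻¹)*`. -/
def zLangL : Language ZLetter :=
  {w | ∃ (n : ℤ) (c : ℕ),
    w = zLetterZPow n ++ (List.replicate c ([.x, .xi] : List ZLetter)).flatten}


section Aux

open Multiplicative

lemma evalWord_append {A G : Type*} [Group G] (f : A → G) (u v : List A) :
    evalWord f (u ++ v) = evalWord f u * evalWord f v := by
  simp [evalWord]

lemma evalWord_cons {A G : Type*} [Group G] (f : A → G) (a : A) (u : List A) :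
    evalWord f (a :: u) = f a * evalWord f u := by simp [evalWord]

lemma eval_rep_x (n : ℕ) :
    evalWord zLetterMap (List.replicate n .x) = Multiplicative.ofAdd (n : ℤ) := by
  induction n with
  | zero => simp [evalWord]
  | succ n ih =>
    rw [List.replicate_succ, evalWord_cons, ih]
    simp [zLetterMap, ← ofAdd_add]
    ring

lemma eval_rep_xi (n : ℕ) :
    evalWord zLetterMap (List.replicate n .xi) = Multiplicative.ofAdd (-(n : ℤ)) := by
  induction n with
  | zero => simp [evalWord]
  | succ n ih =>
    rw [List.replicate_succ, evalWord_cons, ih]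
    rw [show zLetterMap .xi = Multiplicative.ofAdd (-1 : ℤ) from rfl, ← ofAdd_add]
    congr 1
    push_cast
    ring

lemma length_zPow (m : ℤ) : (zLetterZPow m).length = m.natAbs := by
  unfold zLetterZPow
  split <;> simp <;> omega

lemma eval_zPow (m : ℤ) :
    evalWord zLetterMap (zLetterZPow m) = Multiplicative.ofAdd m := by
  unfold zLetterZPow
  split
  · rw [eval_rep_x]; congr 1; omega
  · rw [eval_rep_xi]; congr 1; omega

lemma eval_natAbs_le (u : List ZLetter) :
    (Multiplicative.toAdd (evalWord zLetterMap u)).natAbs ≤ u.length := by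
  induction u with
  | nil => simp [evalWord]
  | cons a u ih =>
    rw [evalWord_cons]
    have h : Multiplicative.toAdd (zLetterMap a * evalWord zLetterMap u)
        = Multiplicative.toAdd (zLetterMap a) + Multiplicative.toAdd (evalWord zLetterMap u) := rfl
    rw [h]
    have h2 : (Multiplicative.toAdd (zLetterMap a)).natAbs = 1 := by
      cases a <;> rfl
    have := Int.natAbs_add_le (Multiplicative.toAdd (zLetterMap a))
      (Multiplicative.toAdd (evalWord zLetterMap u))
    simp only [List.length_cons]
    omega

lemma wordDist_eq (g h : Multiplicative ℤ) :
    wordDist zLetterMap g h = (Multiplicative.toAdd (g⁻¹ * h)).natAbs := by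
  set m : ℤ := Multiplicative.toAdd (g⁻¹ * h) with hm
  have hmem : m.natAbs ∈ {n | ∃ u : List ZLetter, u.length = n ∧
      evalWord zLetterMap u = g⁻¹ * h} := by
    refine ⟨zLetterZPow m, length_zPow m, ?_⟩
    rw [eval_zPow, hm]; rfl
  apply le_antisymm
  · exact Nat.sInf_le hmem
  · have hne : {n | ∃ u : List ZLetter, u.length = n ∧
        evalWord zLetterMap u = g⁻¹ * h}.Nonempty := ⟨_, hmem⟩
    obtain ⟨u, hlen, heval⟩ := Nat.sInf_mem hne
    have := eval_natAbs_le u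
    rw [heval] at this
    rw [hlen] at this
    exact this

lemma unifDist_bddAbove (w₁ w₂ : List ZLetter) :
    BddAbove {m | ∃ n : ℕ, m = wordDist zLetterMap
      (evalWord zLetterMap (w₁.take n)) (evalWord zLetterMap (w₂.take n))} := by
  refine ⟨w₁.length + w₂.length, ?_⟩
  rintro m ⟨n, rfl⟩
  rw [wordDist_eq]
  have h1 := eval_natAbs_le (w₁.take n)
  have h2 := eval_natAbs_le (w₂.take n)
  have l1 : (w₁.take n).length ≤ w₁.length := by simp
  have l2 : (w₂.take n).length ≤ w₂.length := by simp
  have key : Multiplicative.toAdd ((evalWord zLetterMap (w₁.take n))⁻¹ *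
      evalWord zLetterMap (w₂.take n)) =
      Multiplicative.toAdd (evalWord zLetterMap (w₂.take n)) -
      Multiplicative.toAdd (evalWord zLetterMap (w₁.take n)) := by
    simp [sub_eq_neg_add]
  rw [key]
  have := Int.natAbs_sub_le (Multiplicative.toAdd (evalWord zLetterMap (w₂.take n)))
    (Multiplicative.toAdd (evalWord zLetterMap (w₁.take n)))
  omega

/-- Abbreviation: the word `(xx⁻¹)ⁿ`. -/
def Fw (n : ℕ) : List ZLetter := (List.replicate n ([.x, .xi] : List ZLetter)).flatten

lemma Fw_succ (n : ℕ) : Fw (n + 1) = .x :: .xi :: Fw n := rfl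

lemma Fw_length (n : ℕ) : (Fw n).length = 2 * n := by
  induction n with
  | zero => rfl
  | succ n ih => rw [Fw_succ]; simp [ih]; omega

lemma Fw_eval (n : ℕ) : evalWord zLetterMap (Fw n) = 1 := by
  induction n with
  | zero => rfl
  | succ n ih =>
    rw [Fw_succ, evalWord_cons, evalWord_cons, ih]
    simp [zLetterMap, ← ofAdd_add]

lemma Fw_wordInv (n : ℕ) : wordInv ZLetter.inv (Fw n) = Fw n := by
  induction n with
  | zero => rfl
  | succ n ih =>
    rw [Fw_succ]
    show ((ZLetter.x :: ZLetter.xi :: Fw n).reverse.map ZLetter.inv) = _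
    rw [List.reverse_cons, List.reverse_cons, List.append_assoc, List.map_append]
    have h2 : ([ZLetter.xi] ++ [ZLetter.x]).map ZLetter.inv = [ZLetter.x, ZLetter.xi] := rfl
    rw [h2]
    have := ih
    unfold wordInv at this
    rw [this]
    -- now: Fw n ++ [x, xi] = x :: xi :: Fw n
    clear this ih
    induction n with
    | zero => rfl
    | succ n ih2 =>
      rw [Fw_succ]
      simp only [List.cons_append]
      rw [ih2]

lemma wordInv_append {A : Type*} (ι : A → A) (u v : List A) :
    wordInv ι (u ++ v) = wordInv ι v ++ wordInv ι u := by
  simp [wordInv]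

lemma zPow_neg_nat (n : ℕ) : zLetterZPow (-(n : ℤ)) = List.replicate n ZLetter.xi := by
  unfold zLetterZPow
  split
  · have : n = 0 := by omega
    subst this; rfl
  · congr 1; omega

lemma wordInv_rep_xi (n : ℕ) :
    wordInv ZLetter.inv (List.replicate n ZLetter.xi) = List.replicate n ZLetter.x := by
  simp [wordInv, List.reverse_replicate, List.map_replicate, ZLetter.inv]

lemma main_third (n : ℕ) :
    ((List.replicate n ([.x, .xi] : List ZLetter)).flatten ++ List.replicate n ZLetter.x)
        ∈ wordInv ZLetter.inv '' (zLangL : Set (List ZLetter)) ∧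
    (List.replicate n ZLetter.x) ∈ wordInv ZLetter.inv '' (zLangL : Set (List ZLetter)) ∧
    evalWord zLetterMap
        ((List.replicate n ([.x, .xi] : List ZLetter)).flatten ++
          List.replicate n ZLetter.x) =
      evalWord zLetterMap (List.replicate n ZLetter.x) ∧
    n ≤ unifDist zLetterMap
        ((List.replicate n ([.x, .xi] : List ZLetter)).flatten ++
          List.replicate n ZLetter.x)
        (List.replicate n ZLetter.x) := by
  have hF : (List.replicate n ([.x, .xi] : List ZLetter)).flatten = Fw n := rfl
  refine ⟨?_, ?_, ?_, ?_⟩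
  · refine ⟨zLetterZPow (-(n : ℤ)) ++ Fw n, ⟨-(n : ℤ), n, rfl⟩, ?_⟩
    rw [wordInv_append, Fw_wordInv, zPow_neg_nat, wordInv_rep_xi, hF]
  · refine ⟨zLetterZPow (-(n : ℤ)), ⟨-(n : ℤ), 0, by simp⟩, ?_⟩
    rw [zPow_neg_nat, wordInv_rep_xi]
  · rw [hF, evalWord_append, Fw_eval, one_mul]
  · rw [hF]
    unfold unifDist
    apply le_csSup (unifDist_bddAbove _ _)
    refine ⟨2 * n, ?_⟩
    have ht1 : (Fw n ++ List.replicate n ZLetter.x).take (2 * n) = Fw n := by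
      rw [← Fw_length n]
      exact List.take_left
    have ht2 : (List.replicate n ZLetter.x).take (2 * n) = List.replicate n ZLetter.x := by
      apply List.take_of_length_le
      simp; omega
    rw [ht1, ht2, Fw_eval, eval_rep_x, wordDist_eq]
    simp

end Aux

/-- `(A, L)` with `A = {x, x⁻¹}` and `L = { xⁿ : n ∈ ℤ } (xx⁻¹)*` is not a biautomatic
structure: for every `k` there are words `w₁, w₂ ∈ L⁻¹` with `π(w₁) = π(w₂)` and
`D(w₁, w₂) > k`; explicitly, the words `(xx⁻¹)ⁿ xⁿ` and `xⁿ` of `L⁻¹` represent the same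
element of `ℤ` but `D((xx⁻¹)ⁿ xⁿ, xⁿ) ≥ n`. -/
theorem zLangL_not_biautomatic :
    ¬ IsBiautomaticStructure zLetterMap ZLetter.inv zLangL ∧
    (∀ k : ℕ, ∃ w₁ ∈ wordInv ZLetter.inv '' (zLangL : Set (List ZLetter)),
      ∃ w₂ ∈ wordInv ZLetter.inv '' (zLangL : Set (List ZLetter)),
        evalWord zLetterMap w₁ = evalWord zLetterMap w₂ ∧
        k < unifDist zLetterMap w₁ w₂) ∧
    (∀ n : ℕ,
      ((List.replicate n ([.x, .xi] : List ZLetter)).flatten ++ List.replicate n ZLetter.x)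
          ∈ wordInv ZLetter.inv '' (zLangL : Set (List ZLetter)) ∧
      (List.replicate n ZLetter.x) ∈ wordInv ZLetter.inv '' (zLangL : Set (List ZLetter)) ∧
      evalWord zLetterMap
          ((List.replicate n ([.x, .xi] : List ZLetter)).flatten ++
            List.replicate n ZLetter.x) =
        evalWord zLetterMap (List.replicate n ZLetter.x) ∧
      n ≤ unifDist zLetterMap
          ((List.replicate n ([.x, .xi] : List ZLetter)).flatten ++
            List.replicate n ZLetter.x)
          (List.replicate n ZLetter.x)) := by
  
  have main := main_third
  refine ⟨?_, ?_, main⟩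
  · rintro ⟨-, -, -, k, hk⟩
    obtain ⟨h1, h2, h3, h4⟩ := main (k + 1)
    have := hk _ h1 _ h2 none (by simpa using h3)
    simp only [Option.toList, List.append_nil] at this
    omega
  · intro k
    obtain ⟨h1, h2, h3, h4⟩ := main (k + 1)
    exact ⟨_, h1, _, h2, h3, by omega⟩
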